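/- Let D be the string disequality L ≠ R over string variables with regular constraints, let □ be a fresh symbol not in Σ, and let p be a fresh variable constrained to □*. Define D' as L∘p ≠ R∘p. Then D is satisfiable iff D' is satisfiable, and moreover whenever D is satisfiable, D' has a model σ' together with a position i < min(|σ'(L∘p)|, |σ'(R∘p)|) such that σ'(L∘p)[i] ≠ σ'(R∘p)[i] (a mismatch). -/
import Mathlib


/-- Lifting of a variable assignment to concatenations of variables. -/
def applyAssign {V W : Type*} (σ : V → List W) (t : List V) : List W :=
  (t.map σ).flatten

/-- Languages for the extended system: original variables keep their language
(embedded into the extended alphabet `Option Σ`, where `none` is the fresh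
padding symbol `□`), and the fresh variable (the `Sum.inr` one) ranges over `□*`. -/
def langExt {α V : Type*} (lang : V → Set (List α)) :
    V ⊕ Unit → Set (List (Option α))
  | Sum.inl v => (fun w => w.map some) '' lang v
  | Sum.inr _ => {w | ∀ a ∈ w, a = (none : Option α)}

lemma applyAssign_ext {α V : Type*} (σ : V → List α) (σ' : V ⊕ Unit → List (Option α))
    (h : ∀ v, σ' (Sum.inl v) = (σ v).map some) (L : List V) :
    applyAssign σ' (L.map Sum.inl ++ [Sum.inr ()]) =
      (applyAssign σ L).map some ++ σ' (Sum.inr ()) := by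
  simp only [applyAssign, List.map_append, List.map_map, Function.comp_def, h,
    List.flatten_append, List.map_cons, List.map_nil, List.flatten_cons, List.flatten_nil,
    List.append_nil]
  congr 1
  induction L with
  | nil => simp
  | cons v t ih => simp [ih]

lemma mismatch_of_lt {α : Type*} (wL wR : List α)
    (hlt : wL.length < wR.length) :
    ∃ i, ∃ (h1 : i < (wL.map some ++ [(none : Option α)]).length)
           (h2 : i < (wR.map some ++ [(none : Option α)]).length),
      (wL.map some ++ [(none : Option α)])[i] ≠ (wR.map some ++ [(none : Option α)])[i] := by
  refine ⟨wL.length, by simp, by simp; omega, ?_⟩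
  rw [List.getElem_append_right (by simp), List.getElem_append_left (by simpa using hlt)]
  simp

theorem padded_diseq_equisat_and_mismatch {α V : Type*}
    (lang : V → Set (List α)) (L R : List V) :
    ((∃ σ : V → List α, (∀ v, σ v ∈ lang v) ∧ applyAssign σ L ≠ applyAssign σ R) ↔
      (∃ σ' : V ⊕ Unit → List (Option α), (∀ v, σ' v ∈ langExt lang v) ∧
        applyAssign σ' (L.map Sum.inl ++ [Sum.inr ()]) ≠
          applyAssign σ' (R.map Sum.inl ++ [Sum.inr ()])))
    ∧
    ((∃ σ : V → List α, (∀ v, σ v ∈ lang v) ∧ applyAssign σ L ≠ applyAssign σ R) →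
      ∃ σ' : V ⊕ Unit → List (Option α), (∀ v, σ' v ∈ langExt lang v) ∧
        applyAssign σ' (L.map Sum.inl ++ [Sum.inr ()]) ≠
          applyAssign σ' (R.map Sum.inl ++ [Sum.inr ()]) ∧
        ∃ i, ∃ (h1 : i < (applyAssign σ' (L.map Sum.inl ++ [Sum.inr ()])).length)
              (h2 : i < (applyAssign σ' (R.map Sum.inl ++ [Sum.inr ()])).length),
          (applyAssign σ' (L.map Sum.inl ++ [Sum.inr ()]))[i] ≠
            (applyAssign σ' (R.map Sum.inl ++ [Sum.inr ()]))[i]) := by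
  have main : (∃ σ : V → List α, (∀ v, σ v ∈ lang v) ∧ applyAssign σ L ≠ applyAssign σ R) →
      ∃ σ' : V ⊕ Unit → List (Option α), (∀ v, σ' v ∈ langExt lang v) ∧
        applyAssign σ' (L.map Sum.inl ++ [Sum.inr ()]) ≠
          applyAssign σ' (R.map Sum.inl ++ [Sum.inr ()]) ∧
        ∃ i, ∃ (h1 : i < (applyAssign σ' (L.map Sum.inl ++ [Sum.inr ()])).length)
              (h2 : i < (applyAssign σ' (R.map Sum.inl ++ [Sum.inr ()])).length),
          (applyAssign σ' (L.map Sum.inl ++ [Sum.inr ()]))[i] ≠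
            (applyAssign σ' (R.map Sum.inl ++ [Sum.inr ()]))[i] := by
    rintro ⟨σ, hσ, hne⟩
    set σ' : V ⊕ Unit → List (Option α) :=
      fun x => match x with | Sum.inl v => (σ v).map some | Sum.inr _ => [none] with hσ'def
    have hcomp : ∀ v, σ' (Sum.inl v) = (σ v).map some := fun v => rfl
    have hL := applyAssign_ext σ σ' hcomp L
    have hR := applyAssign_ext σ σ' hcomp R
    have hp : σ' (Sum.inr ()) = [none] := rfl
    refine ⟨σ', ?_, ?_, ?_⟩
    · rintro (v | u)
      · exact ⟨σ v, hσ v, rfl⟩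
      · intro a ha; simpa [hσ'def] using ha
    · rw [hL, hR, hp]
      intro h
      exact hne (List.map_injective_iff.mpr (Option.some_injective α)
        (List.append_cancel_right h))
    · rw [hL, hR, hp]
      set wL := applyAssign σ L
      set wR := applyAssign σ R
      rcases lt_trichotomy wL.length wR.length with hlt | heq | hgt
      · exact mismatch_of_lt wL wR hlt
      · -- equal lengths: pointwise mismatch exists
        by_contra hcon
        push_neg at hcon
        apply hne
        apply List.map_injective_iff.mpr (Option.some_injective α)
        apply List.ext_getElem (by simp [heq])
        intro i hi1 hi2
        have h1 : i < (wL.map some ++ [(none : Option α)]).length := by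
          simp at hi1 ⊢; omega
        have h2 : i < (wR.map some ++ [(none : Option α)]).length := by
          simp at hi2 ⊢; omega
        have := hcon i h1 h2
        rwa [List.getElem_append_left (by simpa using hi1),
          List.getElem_append_left (by simpa using hi2)] at this
      · obtain ⟨i, h1, h2, hne'⟩ := mismatch_of_lt wR wL hgt
        exact ⟨i, h2, h1, fun h => hne' h.symm⟩
  constructor
  · constructor
    · intro h
      obtain ⟨σ', h1, h2, _⟩ := main h
      exact ⟨σ', h1, h2⟩
    · rintro ⟨σ', hσ', hne⟩
      choose w hw heq using fun v => hσ' (Sum.inl v)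
      refine ⟨w, hw, ?_⟩
      have hcomp : ∀ v, σ' (Sum.inl v) = (w v).map some := fun v => (heq v).symm
      have hL := applyAssign_ext w σ' hcomp L
      have hR := applyAssign_ext w σ' hcomp R
      intro h
      exact hne (by rw [hL, hR, h])
  · exact main
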